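/- The independence complex of a chordal graph is vertex-decomposable. -/

import Mathlib

open Finset

/-- A (finite, abstract) simplicial complex: a nonempty collection of finite
sets closed under taking subsets. -/
def IsComplex {α : Type} [DecidableEq α] (Δ : Finset (Finset α)) : Prop :=
  Δ.Nonempty ∧ ∀ A ∈ Δ, ∀ B ⊆ A, B ∈ Δ

/-- The link of a face `S` in `Δ`. -/
def link {α : Type} [DecidableEq α] (Δ : Finset (Finset α)) (S : Finset α) :
    Finset (Finset α) :=
  Δ.filter fun F => Disjoint F S ∧ F ∪ S ∈ Δ

/-- The deletion of a vertex `v` from `Δ`. -/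
def del {α : Type} [DecidableEq α] (Δ : Finset (Finset α)) (v : α) :
    Finset (Finset α) :=
  Δ.filter fun F => v ∉ F

/-- A facet: a maximal face. -/
def IsFacet {α : Type} (Δ : Finset (Finset α)) (A : Finset α) : Prop :=
  A ∈ Δ ∧ ∀ B ∈ Δ, A ⊆ B → B = A

/-- Vertex-decomposability: `Δ` is a simplex, or has a shedding vertex `v`
(every face containing `v` admits an exchange) whose deletion and link are
both vertex-decomposable. -/
inductive VertexDecomposable {α : Type} [DecidableEq α] :
    Finset (Finset α) → Prop
  | simplex (A : Finset α) : VertexDecomposable A.powerset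
  | shed (Δ : Finset (Finset α)) (v : α)
      (hshed : ∀ A ∈ Δ, v ∈ A → ∃ w, w ≠ v ∧ w ∉ A ∧ insert w (A.erase v) ∈ Δ)
      (hdel : VertexDecomposable (del Δ v))
      (hlink : VertexDecomposable (link Δ {v})) :
      VertexDecomposable Δ


/-- A graph is chordal if every induced cycle has length 3; equivalently, every
cycle of length at least 4 has a chord (an edge of the graph between two
vertices of the cycle that is not an edge of the cycle). -/
def Chordal {V : Type} (G : SimpleGraph V) : Prop :=
  ∀ ⦃v : V⦄ (c : G.Walk v v), c.IsCycle → 4 ≤ c.length →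
    ∃ a b, G.Adj a b ∧ a ∈ c.support ∧ b ∈ c.support ∧ ¬ c.toSubgraph.Adj a b

/-- The independence complex of a graph: its faces are the independent
(edgeless) vertex subsets. -/
def indComplex (n : ℕ) (G : SimpleGraph (Fin n)) [DecidableRel G.Adj] :
    Finset (Finset (Fin n)) :=
  (Finset.univ : Finset (Fin n)).powerset.filter
    fun A => ∀ a ∈ A, ∀ b ∈ A, ¬ G.Adj a b


/-! ### Auxiliary development: Dirac's theorem and the proof -/

open SimpleGraph Walk
open scoped Classical

section Aux

variable {n : ℕ} {G : SimpleGraph (Fin n)}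

/-- Reachability within a vertex set `A`. -/
def ReachIn (G : SimpleGraph (Fin n)) (A : Finset (Fin n)) (x y : Fin n) : Prop :=
  ∃ p : G.Walk x y, ∀ z ∈ p.support, z ∈ A

lemma ReachIn.refl' {A : Finset (Fin n)} {x : Fin n} (hx : x ∈ A) : ReachIn G A x x :=
  ⟨Walk.nil, by simp [hx]⟩

lemma ReachIn.symm {A : Finset (Fin n)} {x y : Fin n} (h : ReachIn G A x y) :
    ReachIn G A y x := by
  obtain ⟨p, hp⟩ := h
  exact ⟨p.reverse, by simpa [Walk.support_reverse] using hp⟩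

lemma ReachIn.trans {A : Finset (Fin n)} {x y z : Fin n}
    (h1 : ReachIn G A x y) (h2 : ReachIn G A y z) : ReachIn G A x z := by
  obtain ⟨p, hp⟩ := h1; obtain ⟨q, hq⟩ := h2
  refine ⟨p.append q, fun w hw => ?_⟩
  rw [Walk.mem_support_append_iff] at hw
  exact hw.elim (hp w) (hq w)

lemma ReachIn.step {A : Finset (Fin n)} {x y z : Fin n}
    (h : ReachIn G A x y) (ha : G.Adj y z) (hz : z ∈ A) : ReachIn G A x z := by
  obtain ⟨p, hp⟩ := h
  refine ⟨p.concat ha, fun w hw => ?_⟩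
  rw [Walk.concat_eq_append, Walk.mem_support_append_iff] at hw
  rcases hw with hw | hw
  · exact hp w hw
  · have hw' : w = y ∨ w = z := by simpa using hw
    rcases hw' with hw' | hw'
    · subst hw'; exact hp _ p.end_mem_support
    · subst hw'; exact hz

lemma ReachIn.mono {A B : Finset (Fin n)} {x y : Fin n} (hAB : A ⊆ B)
    (h : ReachIn G A x y) : ReachIn G B x y := by
  obtain ⟨p, hp⟩ := h; exact ⟨p, fun z hz => hAB (hp z hz)⟩

lemma ReachIn.mem_left {A : Finset (Fin n)} {x y : Fin n} (h : ReachIn G A x y) : x ∈ A := by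
  obtain ⟨p, hp⟩ := h; exact hp _ p.start_mem_support

lemma ReachIn.mem_right {A : Finset (Fin n)} {x y : Fin n} (h : ReachIn G A x y) : y ∈ A := by
  obtain ⟨p, hp⟩ := h; exact hp _ p.end_mem_support

/-- A minimal walk within `A` exists, and can be taken to be a path. -/
lemma exists_min_walk {A : Finset (Fin n)} {a b : Fin n} (h : ReachIn G A a b) :
    ∃ p : G.Walk a b, (∀ z ∈ p.support, z ∈ A) ∧ p.IsPath ∧
      ∀ q : G.Walk a b, (∀ z ∈ q.support, z ∈ A) → p.length ≤ q.length := by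
  classical
  set S : Set ℕ := {l | ∃ p : G.Walk a b, (∀ z ∈ p.support, z ∈ A) ∧ p.length = l} with hS
  have hne : S.Nonempty := by obtain ⟨p, hp⟩ := h; exact ⟨p.length, p, hp, rfl⟩
  obtain ⟨p, hp, hlen⟩ := Nat.sInf_mem hne
  have hmin : ∀ q : G.Walk a b, (∀ z ∈ q.support, z ∈ A) → sInf S ≤ q.length :=
    fun q hq => Nat.sInf_le ⟨q, hq, rfl⟩
  refine ⟨p.bypass, fun z hz => hp z (p.support_bypass_subset hz), p.bypass_isPath,
    fun q hq => ?_⟩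
  calc p.bypass.length ≤ p.length := p.length_bypass_le
    _ = sInf S := hlen
    _ ≤ q.length := hmin q hq

lemma length_one_edge {u w : Fin n} (q : G.Walk u w) (h : q.length = 1) :
    s(u, w) ∈ q.edges := by
  cases q with
  | nil => simp at h
  | cons ha q' =>
    cases q' with
    | nil => simp
    | cons hb q'' => simp [Walk.length_cons] at h

/-- In a minimal-length walk within `A`, every adjacency between support
vertices is an edge of the walk. -/
lemma chord_of_min {A : Finset (Fin n)} {a b : Fin n} {p : G.Walk a b}
    (hp : ∀ z ∈ p.support, z ∈ A)
    (hmin : ∀ q : G.Walk a b, (∀ z ∈ q.support, z ∈ A) → p.length ≤ q.length)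
    {u w : Fin n} (hu : u ∈ p.support) (hw : w ∈ p.support) (huw : G.Adj u w) :
    s(u, w) ∈ p.edges := by
  set T := p.takeUntil u hu with hT
  set D := p.dropUntil u hu with hD
  have hspec : T.append D = p := p.take_spec hu
  have hwTD : w ∈ T.support ∨ w ∈ D.support := by
    rw [← hspec] at hw
    rcases (Walk.mem_support_append_iff _ _).mp hw with h | h
    · exact Or.inl h
    · exact Or.inr h
  have hTsup : ∀ z ∈ T.support, z ∈ A := fun z hz => hp z (p.support_takeUntil_subset hu hz)
  have hDsup : ∀ z ∈ D.support, z ∈ A := fun z hz => hp z (p.support_dropUntil_subset hu hz)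
  have hlenp : p.length = T.length + D.length := by
    rw [← hspec, Walk.length_append]
  rcases hwTD with hwT | hwD
  · -- w occurs before u in p
    set t1 := T.takeUntil w hwT with ht1
    set d1 := T.dropUntil w hwT with hd1
    have hspec2 : t1.append d1 = T := T.take_spec hwT
    have hlenT : T.length = t1.length + d1.length := by
      rw [← hspec2, Walk.length_append]
    -- candidate shorter walk : a → w → u → b
    have hq : ∀ z ∈ (t1.append (Walk.cons huw.symm D)).support, z ∈ A := by
      intro z hz
      rcases (Walk.mem_support_append_iff _ _).mp hz with h | h
      · exact hTsup z (T.support_takeUntil_subset hwT h)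
      · rw [Walk.support_cons] at h
        rcases List.mem_cons.mp h with rfl | h
        · exact hTsup _ hwT
        · exact hDsup z h
    have hle := hmin _ hq
    rw [Walk.length_append, Walk.length_cons, hlenp, hlenT] at hle
    have hd1le : d1.length ≤ 1 := by omega
    interval_cases h : d1.length
    · exact absurd (Walk.eq_of_length_eq_zero h) huw.ne'
    · have := length_one_edge d1 h
      have h2 : s(w, u) ∈ T.edges := T.edges_dropUntil_subset hwT this
      have h3 : s(w, u) ∈ p.edges := by
        rw [← hspec, Walk.edges_append]; exact List.mem_append_left _ h2
      rwa [Sym2.eq_swap] at h3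
  · -- w occurs after u in p
    set t2 := D.takeUntil w hwD with ht2
    set d2 := D.dropUntil w hwD with hd2
    have hspec2 : t2.append d2 = D := D.take_spec hwD
    have hlenD : D.length = t2.length + d2.length := by
      rw [← hspec2, Walk.length_append]
    have hq : ∀ z ∈ (T.append (Walk.cons huw d2)).support, z ∈ A := by
      intro z hz
      rcases (Walk.mem_support_append_iff _ _).mp hz with h | h
      · exact hTsup z h
      · rw [Walk.support_cons] at h
        rcases List.mem_cons.mp h with rfl | h
        · exact hDsup _ D.start_mem_support
        · exact hDsup z (D.support_dropUntil_subset hwD h)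
    have hle := hmin _ hq
    rw [Walk.length_append, Walk.length_cons, hlenp, hlenD] at hle
    have ht2le : t2.length ≤ 1 := by omega
    interval_cases h : t2.length
    · exact absurd (Walk.eq_of_length_eq_zero h) huw.ne
    · have := length_one_edge t2 h
      have h2 : s(u, w) ∈ D.edges := D.edges_takeUntil_subset hwD this
      rw [← hspec, Walk.edges_append]; exact List.mem_append_right _ h2

/-- Separator of x and y inside W. -/
def IsSep (G : SimpleGraph (Fin n)) (W : Finset (Fin n)) (x y : Fin n)
    (T : Finset (Fin n)) : Prop :=
  T ⊆ W ∧ x ∉ T ∧ y ∉ T ∧ ¬ ReachIn G (W \ T) x y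

lemma IsSep.symm' {W : Finset (Fin n)} {x y : Fin n} {T : Finset (Fin n)}
    (h : IsSep G W x y T) : IsSep G W y x T :=
  ⟨h.1, h.2.2.1, h.2.1, fun hr => h.2.2.2 hr.symm⟩

lemma not_reachIn_pair {x y : Fin n} (hxy : x ≠ y) (hnadj : ¬ G.Adj x y) :
    ¬ ReachIn G {x, y} x y := by
  intro h
  obtain ⟨p, hp, hpath, -⟩ := exists_min_walk h
  have hnd : p.support.Nodup := hpath.support_nodup
  have hlen : p.support.length ≤ 2 := by
    have h1 : p.support.toFinset.card = p.support.length := List.toFinset_card_of_nodup hnd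
    have h2 : p.support.toFinset ⊆ ({x, y} : Finset (Fin n)) := by
      intro z hz; exact hp z (List.mem_toFinset.mp hz)
    have := Finset.card_le_card h2
    have hcard : ({x, y} : Finset (Fin n)).card ≤ 2 := Finset.card_insert_le _ _ |>.trans (by simp)
    omega
  rw [Walk.length_support] at hlen
  have h0 : p.length ≠ 0 := fun h0 => hxy (Walk.eq_of_length_eq_zero h0)
  have h1 : p.length = 1 := by omega
  exact hnadj (p.adj_of_mem_edges (length_one_edge p h1))

lemma exists_min_sep {W : Finset (Fin n)} {x y : Fin n} (hx : x ∈ W) (hy : y ∈ W)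
    (hxy : x ≠ y) (hnadj : ¬ G.Adj x y) :
    ∃ S, IsSep G W x y S ∧ ∀ T, IsSep G W x y T → S.card ≤ T.card := by
  have h0 : IsSep G W x y (W \ {x, y}) := by
    refine ⟨Finset.sdiff_subset, by simp, by simp, fun hr => ?_⟩
    refine not_reachIn_pair hxy hnadj (hr.mono ?_)
    intro z hz
    simp only [Finset.mem_sdiff, not_and, not_not] at hz
    exact hz.2 hz.1
  have hne : {k : ℕ | ∃ T, IsSep G W x y T ∧ T.card = k}.Nonempty := ⟨_, _, h0, rfl⟩
  obtain ⟨S, hS, hcard⟩ := Nat.sInf_mem hne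
  exact ⟨S, hS, fun T hT => hcard ▸ Nat.sInf_le ⟨T, hT, rfl⟩⟩

/-- The connected component of `x` within the vertex set `A`. -/
noncomputable def comp (G : SimpleGraph (Fin n)) (A : Finset (Fin n)) (x : Fin n) :
    Finset (Fin n) :=
  A.filter (fun z => ReachIn G A x z)

lemma mem_comp {A : Finset (Fin n)} {x z : Fin n} :
    z ∈ comp G A x ↔ z ∈ A ∧ ReachIn G A x z := Finset.mem_filter

lemma comp_subset {A : Finset (Fin n)} {x : Fin n} : comp G A x ⊆ A :=
  Finset.filter_subset _ _

lemma self_mem_comp {A : Finset (Fin n)} {x : Fin n} (hx : x ∈ A) : x ∈ comp G A x :=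
  mem_comp.mpr ⟨hx, ReachIn.refl' hx⟩

lemma comp_closed {A : Finset (Fin n)} {x z z' : Fin n} (hz : z ∈ comp G A x)
    (ha : G.Adj z z') (hz' : z' ∈ A) : z' ∈ comp G A x :=
  mem_comp.mpr ⟨hz', (mem_comp.mp hz).2.step ha hz'⟩

lemma reachIn_comp_of_mem {A : Finset (Fin n)} {x u w : Fin n}
    (hu : u ∈ comp G A x) (hw : w ∈ comp G A x) : ReachIn G (comp G A x) u w := by
  have key : ∀ v, v ∈ comp G A x → ReachIn G (comp G A x) x v := by
    intro v hv
    obtain ⟨p, hp⟩ := (mem_comp.mp hv).2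
    refine ⟨p, fun z hz => mem_comp.mpr ⟨hp z hz, ?_⟩⟩
    exact ⟨p.takeUntil z hz, fun w' hw' => hp w' (p.support_takeUntil_subset hz hw')⟩
  exact (key u hu).symm.trans (key w hw)

lemma exists_concat_of_length_ne_zero {x s : Fin n} (q : G.Walk x s) (h : q.length ≠ 0) :
    ∃ (u : Fin n) (r : G.Walk x u) (ha : G.Adj u s), q = r.concat ha := by
  cases hq : q.reverse with
  | nil =>
    exfalso
    have := congrArg Walk.length hq
    rw [Walk.length_reverse] at this
    exact h (by simpa using this)
  | cons ha r =>
    refine ⟨_, r.reverse, ha.symm, ?_⟩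
    have h2 := congrArg Walk.reverse hq
    rw [Walk.reverse_reverse, Walk.reverse_cons] at h2
    exact h2

/-- Every vertex of a minimum separator has a neighbour in the `x`-component. -/
lemma sep_neighbor {W : Finset (Fin n)} {x y : Fin n} {S : Finset (Fin n)}
    (hS : IsSep G W x y S) (hmin : ∀ T, IsSep G W x y T → S.card ≤ T.card)
    {s : Fin n} (hs : s ∈ S) :
    ∃ u, u ∈ comp G (W \ S) x ∧ G.Adj u s := by
  have hxS : x ∉ S := hS.2.1
  have hyS : y ∉ S := hS.2.2.1
  set T := S.erase s with hT
  have hcardlt : T.card < S.card := Finset.card_erase_lt_of_mem hs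
  have hreach : ReachIn G (W \ T) x y := by
    by_contra hc
    exact absurd (hmin T ⟨(Finset.erase_subset _ _).trans hS.1,
      fun h => hxS (Finset.mem_of_mem_erase h),
      fun h => hyS (Finset.mem_of_mem_erase h), hc⟩) (by omega)
  obtain ⟨p, hp, hpath, -⟩ := exists_min_walk hreach
  have hsp : s ∈ p.support := by
    by_contra hns
    refine hS.2.2.2 ⟨p, fun z hz => ?_⟩
    have hzWT := hp z hz
    rw [Finset.mem_sdiff] at hzWT ⊢
    refine ⟨hzWT.1, fun hzS => ?_⟩
    have : z ≠ s := fun h => hns (h ▸ hz)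
    exact hzWT.2 (Finset.mem_erase.mpr ⟨this, hzS⟩)
  set q := p.takeUntil s hsp with hq
  have hcount : q.support.count s = 1 := p.count_support_takeUntil_eq_one hsp
  have hxs : x ≠ s := fun h => hxS (h ▸ hs)
  have hql : q.length ≠ 0 := fun h => hxs (Walk.eq_of_length_eq_zero h)
  obtain ⟨u, r, ha, hqr⟩ := exists_concat_of_length_ne_zero q hql
  have hsupq : q.support = r.support ++ [s] := by
    rw [hqr, Walk.concat_eq_append, Walk.support_append]
    simp
  have hsr : s ∉ r.support := by
    intro hsr
    have : 2 ≤ q.support.count s := by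
      rw [hsupq, List.count_append]
      have h1 : 0 < r.support.count s := List.count_pos_iff.mpr hsr
      have h2 : List.count s [s] = 1 := by simp
      omega
    omega
  have hrsub : ∀ z ∈ r.support, z ∈ W \ S := by
    intro z hz
    have hzq : z ∈ q.support := by rw [hsupq]; exact List.mem_append_left _ hz
    have hzp : z ∈ W \ T := hp z (p.support_takeUntil_subset hsp hzq)
    rw [Finset.mem_sdiff] at hzp ⊢
    refine ⟨hzp.1, fun hzS => ?_⟩
    have hzs : z ≠ s := fun h => hsr (h ▸ hz)
    exact hzp.2 (Finset.mem_erase.mpr ⟨hzs, hzS⟩)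
  refine ⟨u, mem_comp.mpr ⟨hrsub u r.end_mem_support, ⟨r, hrsub⟩⟩, ha⟩

/-- In a chordal graph, a minimum separator is a clique. -/
lemma sep_clique (hG : Chordal G) {W : Finset (Fin n)} {x y : Fin n} {S : Finset (Fin n)}
    (hxW : x ∈ W) (hyW : y ∈ W)
    (hS : IsSep G W x y S) (hmin : ∀ T, IsSep G W x y T → S.card ≤ T.card)
    {a b : Fin n} (ha : a ∈ S) (hb : b ∈ S) (hab : a ≠ b) : G.Adj a b := by
  by_contra hnab
  set Cx := comp G (W \ S) x with hCx
  set Cy := comp G (W \ S) y with hCy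
  -- disjointness of the two components
  have hdisj : ∀ z, z ∈ Cx → z ∈ Cy → False := by
    intro z hzx hzy
    exact hS.2.2.2 ((mem_comp.mp hzx).2.trans (mem_comp.mp hzy).2.symm)
  have hnoedge : ∀ u w, u ∈ Cx → w ∈ Cy → ¬ G.Adj u w := by
    intro u w hu hw hadj
    exact hdisj w (comp_closed hu hadj (comp_subset hw)) hw
  have hSC : ∀ s ∈ S, s ∉ Cx ∧ s ∉ Cy := by
    intro s hs
    constructor <;> · intro hc; have := comp_subset hc; rw [Finset.mem_sdiff] at this; exact this.2 hs
  -- neighbours of a and b in each component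
  obtain ⟨ua, hua, haua⟩ := sep_neighbor hS hmin ha
  obtain ⟨ub, hub, hbub⟩ := sep_neighbor hS hmin hb
  have hminy : ∀ T, IsSep G W y x T → S.card ≤ T.card := fun T hT => hmin T hT.symm'
  obtain ⟨va, hva, hava⟩ := sep_neighbor hS.symm' hminy ha
  obtain ⟨vb, hvb, hbvb⟩ := sep_neighbor hS.symm' hminy hb
  -- reachability through each component
  have hreach1 : ReachIn G (insert a (insert b Cx)) a b := by
    have h1 : ReachIn G (insert a (insert b Cx)) a ua :=
      (ReachIn.refl' (Finset.mem_insert_self _ _)).step haua.symm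
        (by simp [Finset.mem_insert]; tauto)
    have h2 : ReachIn G (insert a (insert b Cx)) ua ub :=
      (reachIn_comp_of_mem hua hub).mono (by intro z hz; simp [Finset.mem_insert]; tauto)
    have h3 : ReachIn G (insert a (insert b Cx)) ub b :=
      (ReachIn.refl' (by simp [Finset.mem_insert]; tauto)).step hbub
        (by simp [Finset.mem_insert])
    exact (h1.trans h2).trans h3
  have hreach2 : ReachIn G (insert a (insert b Cy)) a b := by
    have h1 : ReachIn G (insert a (insert b Cy)) a va :=
      (ReachIn.refl' (Finset.mem_insert_self _ _)).step hava.symm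
        (by simp [Finset.mem_insert]; tauto)
    have h2 : ReachIn G (insert a (insert b Cy)) va vb :=
      (reachIn_comp_of_mem hva hvb).mono (by intro z hz; simp [Finset.mem_insert]; tauto)
    have h3 : ReachIn G (insert a (insert b Cy)) vb b :=
      (ReachIn.refl' (by simp [Finset.mem_insert]; tauto)).step hbvb
        (by simp [Finset.mem_insert])
    exact (h1.trans h2).trans h3
  obtain ⟨p1, hp1A, hp1path, hp1min⟩ := exists_min_walk hreach1
  obtain ⟨p2, hp2A, hp2path, hp2min⟩ := exists_min_walk hreach2
  -- basic facts about p1, p2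
  have hlen1 : 2 ≤ p1.length := by
    have h0 : p1.length ≠ 0 := fun h => hab (Walk.eq_of_length_eq_zero h)
    have h1 : p1.length ≠ 1 := fun h => hnab (p1.adj_of_mem_edges (length_one_edge p1 h))
    omega
  have hlen2 : 2 ≤ p2.length := by
    have h0 : p2.length ≠ 0 := fun h => hab (Walk.eq_of_length_eq_zero h)
    have h1 : p2.length ≠ 1 := fun h => hnab (p2.adj_of_mem_edges (length_one_edge p2 h))
    omega
  have hsupp1 : ∀ z ∈ p1.support, z = a ∨ z = b ∨ z ∈ Cx := by
    intro z hz; have := hp1A z hz; simpa [Finset.mem_insert] using this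
  have hsupp2 : ∀ z ∈ p2.support, z = a ∨ z = b ∨ z ∈ Cy := by
    intro z hz; have := hp2A z hz; simpa [Finset.mem_insert] using this
  -- the cycle
  set c : G.Walk a a := p1.append p2.reverse with hc
  have hclen : c.length = p1.length + p2.length := by
    rw [hc, Walk.length_append, Walk.length_reverse]
  have hlen4 : 4 ≤ c.length := by omega
  -- membership in supports
  have hmemc : ∀ z ∈ c.support, z ∈ p1.support ∨ z ∈ p2.support := by
    intro z hz
    rcases (Walk.mem_support_append_iff _ _).mp hz with h | h
    · exact Or.inl h
    · right; rwa [Walk.support_reverse, List.mem_reverse] at h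
  -- a not in tails etc.
  have hnd1 : p1.support.Nodup := hp1path.support_nodup
  have hnd2r : p2.reverse.support.Nodup := hp2path.reverse.support_nodup
  have hanot1 : a ∉ p1.support.tail := by
    have := hnd1
    rw [p1.support_eq_cons] at this
    exact (List.nodup_cons.mp this).1
  have hbnot2 : b ∉ p2.reverse.support.tail := by
    have := hnd2r
    rw [p2.reverse.support_eq_cons] at this
    exact (List.nodup_cons.mp this).1
  have hcyc : c.IsCycle := by
    rw [Walk.isCycle_def]
    refine ⟨?_, ?_, ?_⟩
    · -- trail
      rw [Walk.isTrail_def, hc, Walk.edges_append, List.nodup_append]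
      refine ⟨hp1path.isTrail.edges_nodup, hp2path.reverse.isTrail.edges_nodup, ?_⟩
      intro e he1 e' he2 hee'
      subst hee'
      rw [Walk.edges_reverse, List.mem_reverse] at he2
      induction e using Sym2.ind with
      | _ u w =>
        have hu1 := p1.fst_mem_support_of_mem_edges he1
        have hw1 := p1.snd_mem_support_of_mem_edges he1
        have hu2 := p2.fst_mem_support_of_mem_edges he2
        have hw2 := p2.snd_mem_support_of_mem_edges he2
        have huab : u = a ∨ u = b := by
          rcases hsupp1 u hu1 with h | h | h
          · tauto
          · tauto
          · rcases hsupp2 u hu2 with h' | h' | h'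
            · tauto
            · tauto
            · exact absurd (hdisj u h h') (by tauto)
        have hwab : w = a ∨ w = b := by
          rcases hsupp1 w hw1 with h | h | h
          · tauto
          · tauto
          · rcases hsupp2 w hw2 with h' | h' | h'
            · tauto
            · tauto
            · exact absurd (hdisj w h h') (by tauto)
        have hadjuw : G.Adj u w := p1.adj_of_mem_edges he1
        rcases huab with rfl | rfl <;> rcases hwab with rfl | rfl
        · exact hadjuw.ne rfl
        · exact hnab hadjuw
        · exact hnab hadjuw.symm
        · exact hadjuw.ne rfl
    · -- not nil
      intro hnil
      have : c.length = 0 := by rw [hnil]; rfl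
      omega
    · -- tail nodup
      rw [hc, Walk.tail_support_append, List.nodup_append]
      refine ⟨hnd1.sublist (List.tail_sublist _), hnd2r.sublist (List.tail_sublist _), ?_⟩
      intro z hz1 z' hz2 hzz'
      subst hzz'
      have hz1' : z ∈ p1.support := List.mem_of_mem_tail hz1
      have hz2' : z ∈ p2.support := by
        have := List.mem_of_mem_tail hz2
        rwa [Walk.support_reverse, List.mem_reverse] at this
      have hza : z ≠ a := fun h => hanot1 (h ▸ hz1)
      have hzb : z ≠ b := fun h => hbnot2 (h ▸ hz2)
      rcases hsupp1 z hz1' with h | h | h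
      · exact hza h
      · exact hzb h
      · rcases hsupp2 z hz2' with h' | h' | h'
        · exact hza h'
        · exact hzb h'
        · exact hdisj z h h'
  -- apply chordality
  obtain ⟨u, w, hadj, hus, hws, hnsub⟩ := hG c hcyc hlen4
  have hnce : s(u, w) ∉ c.edges := by
    intro he
    exact hnsub (Subgraph.mem_edgeSet.mp ((c.mem_edges_toSubgraph).mpr he))
  have hedge1 : ∀ e ∈ p1.edges, e ∈ c.edges := by
    intro e he; rw [hc, Walk.edges_append]; exact List.mem_append_left _ he
  have hedge2 : ∀ e ∈ p2.edges, e ∈ c.edges := by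
    intro e he
    rw [hc, Walk.edges_append]
    exact List.mem_append_right _ (by rw [Walk.edges_reverse, List.mem_reverse]; exact he)
  rcases hmemc u hus with hu1 | hu2 <;> rcases hmemc w hws with hw1 | hw2
  · exact hnce (hedge1 _ (chord_of_min hp1A hp1min hu1 hw1 hadj))
  · by_cases hw1 : w ∈ p1.support
    · exact hnce (hedge1 _ (chord_of_min hp1A hp1min hu1 hw1 hadj))
    by_cases hu2 : u ∈ p2.support
    · exact hnce (hedge2 _ (chord_of_min hp2A hp2min hu2 hw2 hadj))
    have hu_ne_a : u ≠ a := fun h => hu2 (h ▸ p2.start_mem_support)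
    have hu_ne_b : u ≠ b := fun h => hu2 (h ▸ p2.end_mem_support)
    have huCx : u ∈ Cx := by rcases hsupp1 u hu1 with h | h | h <;> tauto
    have hw_ne_a : w ≠ a := fun h => hw1 (h ▸ p1.start_mem_support)
    have hw_ne_b : w ≠ b := fun h => hw1 (h ▸ p1.end_mem_support)
    have hwCy : w ∈ Cy := by rcases hsupp2 w hw2 with h | h | h <;> tauto
    exact hnoedge u w huCx hwCy hadj
  · by_cases hu1 : u ∈ p1.support
    · exact hnce (hedge1 _ (chord_of_min hp1A hp1min hu1 hw1 hadj))
    by_cases hw2 : w ∈ p2.support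
    · exact hnce (hedge2 _ (chord_of_min hp2A hp2min hu2 hw2 hadj))
    have hw_ne_a : w ≠ a := fun h => hw2 (h ▸ p2.start_mem_support)
    have hw_ne_b : w ≠ b := fun h => hw2 (h ▸ p2.end_mem_support)
    have hwCx : w ∈ Cx := by rcases hsupp1 w hw1 with h | h | h <;> tauto
    have hu_ne_a : u ≠ a := fun h => hu1 (h ▸ p1.start_mem_support)
    have hu_ne_b : u ≠ b := fun h => hu1 (h ▸ p1.end_mem_support)
    have huCy : u ∈ Cy := by rcases hsupp2 u hu2 with h | h | h <;> tauto
    exact hnoedge w u hwCx huCy hadj.symm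
  · exact hnce (hedge2 _ (chord_of_min hp2A hp2min hu2 hw2 hadj))

/-- `v` is a simplicial vertex of the subgraph induced on `W`. -/
def SimpVert (G : SimpleGraph (Fin n)) (W : Finset (Fin n)) (v : Fin n) : Prop :=
  v ∈ W ∧ ∀ a ∈ W, ∀ b ∈ W, G.Adj a v → G.Adj b v → a ≠ b → G.Adj a b

/-- Dirac: a chordal graph is complete or has two nonadjacent simplicial vertices. -/
theorem dirac (hG : Chordal G) :
    ∀ (k : ℕ) (W : Finset (Fin n)), W.card ≤ k → W.Nonempty →
      (∀ a ∈ W, ∀ b ∈ W, a ≠ b → G.Adj a b) ∨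
      ∃ v1 v2, SimpVert G W v1 ∧ SimpVert G W v2 ∧ v1 ≠ v2 ∧ ¬ G.Adj v1 v2 := by
  intro k
  induction k with
  | zero =>
    intro W hcard hne
    exact absurd (Finset.card_eq_zero.mp (Nat.le_zero.mp hcard)) hne.ne_empty
  | succ k ih =>
    intro W hcard hne
    by_cases hcomp : ∀ a ∈ W, ∀ b ∈ W, a ≠ b → G.Adj a b
    · exact Or.inl hcomp
    push_neg at hcomp
    obtain ⟨x, hxW, y, hyW, hxy, hnadj⟩ := hcomp
    obtain ⟨S, hS, hmin⟩ := exists_min_sep hxW hyW hxy hnadj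
    have hminy : ∀ T, IsSep G W y x T → S.card ≤ T.card := fun T hT => hmin T hT.symm'
    have hclique : ∀ a ∈ S, ∀ b ∈ S, a ≠ b → G.Adj a b :=
      fun a ha b hb hab => sep_clique hG hxW hyW hS hmin ha hb hab
    -- a simplicial vertex inside the component of x' (applied to both sides)
    have side : ∀ (x' y' : Fin n), x' ∈ W → y' ∈ W → IsSep G W x' y' S →
        (∀ T, IsSep G W x' y' T → S.card ≤ T.card) →
        ∃ v, v ∈ comp G (W \ S) x' ∧ SimpVert G W v := by
      intro x' y' hx' hy' hS' hmin'
      set C := comp G (W \ S) x' with hC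
      have hx'S : x' ∉ S := hS'.2.1
      have hx'C : x' ∈ C := self_mem_comp (Finset.mem_sdiff.mpr ⟨hx', hx'S⟩)
      have hWx : C ∪ S ⊆ W := by
        intro z hz
        rcases Finset.mem_union.mp hz with h | h
        · exact (Finset.sdiff_subset) (comp_subset h)
        · exact hS'.1 h
      have hy'CS : y' ∉ C ∪ S := by
        rw [Finset.mem_union]
        rintro (h | h)
        · exact hS'.2.2.2 (mem_comp.mp h).2
        · exact hS'.2.2.1 h
      have hcard2 : (C ∪ S).card ≤ k := by
        have hsub : C ∪ S ⊆ W.erase y' := Finset.subset_erase.mpr ⟨hWx, hy'CS⟩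
        have h1 := Finset.card_le_card hsub
        have h2 : (W.erase y').card = W.card - 1 := Finset.card_erase_of_mem hy'
        have h3 : 1 ≤ W.card := Finset.card_pos.mpr ⟨y', hy'⟩
        omega
      have hneC : (C ∪ S).Nonempty := ⟨x', Finset.mem_union_left _ hx'C⟩
      have hliftnbr : ∀ v, v ∈ C → ∀ z ∈ W, G.Adj z v → z ∈ C ∪ S := by
        intro v hv z hz hadj
        by_cases hzS : z ∈ S
        · exact Finset.mem_union_right _ hzS
        · exact Finset.mem_union_left _
            (comp_closed hv hadj.symm (Finset.mem_sdiff.mpr ⟨hz, hzS⟩))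
      have hlift : ∀ v, v ∈ C → SimpVert G (C ∪ S) v → SimpVert G W v := by
        intro v hv hsv
        refine ⟨hWx (Finset.mem_union_left _ hv), fun a haW b hbW hav hbv hab => ?_⟩
        exact hsv.2 a (hliftnbr v hv a haW hav) b (hliftnbr v hv b hbW hbv) hav hbv hab
      rcases ih (C ∪ S) hcard2 hneC with hcomp' | ⟨v1, v2, hv1, hv2, hne12, hnadj12⟩
      · refine ⟨x', hx'C, hlift x' hx'C ⟨Finset.mem_union_left _ hx'C, ?_⟩⟩
        exact fun a ha b hb _ _ hab => hcomp' a ha b hb hab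
      · by_cases hv1S : v1 ∈ S
        · have hv2S : v2 ∉ S := fun h => hnadj12 (hclique v1 hv1S v2 h hne12)
          have hv2C : v2 ∈ C := by
            rcases Finset.mem_union.mp hv1.1 with _ | _
            all_goals rcases Finset.mem_union.mp hv2.1 with h | h
            · exact h
            · exact absurd h hv2S
            · exact h
            · exact absurd h hv2S
          exact ⟨v2, hv2C, hlift v2 hv2C hv2⟩
        · have hv1C : v1 ∈ C := by
            rcases Finset.mem_union.mp hv1.1 with h | h
            · exact h
            · exact absurd h hv1S
          exact ⟨v1, hv1C, hlift v1 hv1C hv1⟩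
    obtain ⟨v, hvC, hvS⟩ := side x y hxW hyW hS hmin
    obtain ⟨v', hv'C, hv'S⟩ := side y x hyW hxW hS.symm' hminy
    right
    have hdisj : ∀ z, z ∈ comp G (W \ S) x → z ∈ comp G (W \ S) y → False := by
      intro z hzx hzy
      exact hS.2.2.2 ((mem_comp.mp hzx).2.trans (mem_comp.mp hzy).2.symm)
    refine ⟨v, v', hvS, hv'S, ?_, ?_⟩
    · intro h
      exact hdisj v hvC (h ▸ hv'C)
    · intro hadj
      have hv' : v' ∈ comp G (W \ S) x :=
        comp_closed hvC hadj (comp_subset hv'C)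
      exact hdisj v' hv' hv'C

lemma exists_simplicial (hG : Chordal G) {W : Finset (Fin n)} (hne : W.Nonempty) :
    ∃ v, SimpVert G W v := by
  rcases dirac hG W.card W le_rfl hne with hcomp | ⟨v1, _, hv1, _⟩
  · obtain ⟨v, hv⟩ := hne
    exact ⟨v, hv, fun a ha b hb _ _ hab => hcomp a ha b hb hab⟩
  · exact ⟨v1, hv1⟩

/-- The independence complex restricted to vertex set `W`. -/
def IndW (G : SimpleGraph (Fin n)) [DecidableRel G.Adj] (W : Finset (Fin n)) :
    Finset (Finset (Fin n)) :=
  W.powerset.filter fun A => ∀ a ∈ A, ∀ b ∈ A, ¬ G.Adj a b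

variable [DecidableRel G.Adj]

lemma mem_IndW {W A : Finset (Fin n)} :
    A ∈ IndW G W ↔ A ⊆ W ∧ ∀ a ∈ A, ∀ b ∈ A, ¬ G.Adj a b := by
  simp [IndW]

theorem IndW_VD (hG : Chordal G) : ∀ (k : ℕ) (W : Finset (Fin n)), W.card ≤ k →
    VertexDecomposable (IndW G W) := by
  intro k
  induction k with
  | zero =>
    intro W hcard
    have hW : W = ∅ := Finset.card_eq_zero.mp (Nat.le_zero.mp hcard)
    have : IndW G W = W.powerset := by
      subst hW
      apply Finset.filter_true_of_mem
      intro A hA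
      simp only [Finset.mem_powerset, Finset.subset_empty] at hA
      subst hA; simp
    rw [this]; exact VertexDecomposable.simplex W
  | succ k ih =>
    intro W hcard
    by_cases hE : ∀ a ∈ W, ∀ b ∈ W, ¬ G.Adj a b
    · have : IndW G W = W.powerset := by
        apply Finset.filter_true_of_mem
        intro A hA
        rw [Finset.mem_powerset] at hA
        exact fun a ha b hb => hE a (hA ha) b (hA hb)
      rw [this]; exact VertexDecomposable.simplex W
    push_neg at hE
    obtain ⟨a0, ha0W, b0, hb0W, hadj0⟩ := hE
    -- the set of non-isolated vertices of W
    set W' := W.filter (fun v => ∃ u ∈ W, G.Adj u v) with hW'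
    have hW'sub : W' ⊆ W := Finset.filter_subset _ _
    have hmemW' : ∀ z, z ∈ W' ↔ z ∈ W ∧ ∃ u ∈ W, G.Adj u z := by
      intro z; simp [hW']
    have hne' : W'.Nonempty := ⟨b0, (hmemW' b0).mpr ⟨hb0W, a0, ha0W, hadj0⟩⟩
    obtain ⟨v, hvW', hvsimp⟩ := exists_simplicial hG hne'
    obtain ⟨hvW, u, huW, huv⟩ := (hmemW' v).mp hvW'
    have huW' : u ∈ W' := (hmemW' u).mpr ⟨huW, v, hvW, huv.symm⟩
    -- neighbours (within W) of v are pairwise adjacent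
    have hsimpW : ∀ a ∈ W, ∀ b ∈ W, G.Adj a v → G.Adj b v → a ≠ b → G.Adj a b := by
      intro a haW b hbW hav hbv hab
      have haW' : a ∈ W' := (hmemW' a).mpr ⟨haW, v, hvW, hav.symm⟩
      have hbW' : b ∈ W' := (hmemW' b).mpr ⟨hbW, v, hvW, hbv.symm⟩
      exact hvsimp a haW' b hbW' hav hbv hab
    have hvu : v ≠ u := huv.ne'
    -- u is a shedding vertex
    apply VertexDecomposable.shed (IndW G W) u
    · -- shedding property, exchanging u for v
      intro A hA huA
      rw [mem_IndW] at hA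
      obtain ⟨hAW, hAind⟩ := hA
      have hvA : v ∉ A := fun hv => hAind u huA v hv huv
      refine ⟨v, hvu, hvA, ?_⟩
      rw [mem_IndW]
      constructor
      · intro z hz
        rcases Finset.mem_insert.mp hz with rfl | hz
        · exact hvW
        · exact hAW (Finset.erase_subset _ _ hz)
      · intro c hc d hd
        have key : ∀ d' ∈ A.erase u, ¬ G.Adj v d' := by
          intro d' hd' hvd
          have hdW : d' ∈ W := hAW (Finset.erase_subset _ _ hd')
          have hdu : d' ≠ u := Finset.ne_of_mem_erase hd'
          exact hAind d' (Finset.erase_subset _ _ hd') u huA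
            (hsimpW d' hdW u huW hvd.symm huv hdu)
        intro hcd
        rcases Finset.mem_insert.mp hc with hcv | hc
        · rcases Finset.mem_insert.mp hd with hdv | hd
          · rw [hcv, hdv] at hcd; exact G.loopless.irrefl _ hcd
          · rw [hcv] at hcd; exact key d hd hcd
        · rcases Finset.mem_insert.mp hd with hdv | hd
          · rw [hdv] at hcd; exact key c hc hcd.symm
          · exact hAind c (Finset.erase_subset _ _ hc) d (Finset.erase_subset _ _ hd) hcd
    · -- deletion
      have hdel : del (IndW G W) u = IndW G (W.erase u) := by
        ext F
        simp only [del, Finset.mem_filter, mem_IndW, Finset.subset_erase]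
        tauto
      rw [hdel]
      apply ih
      have := Finset.card_erase_of_mem huW
      have : 1 ≤ W.card := Finset.card_pos.mpr ⟨u, huW⟩
      omega
    · -- link
      have hlink : link (IndW G W) {u}
          = IndW G (W.filter fun z => ¬ G.Adj u z ∧ z ≠ u) := by
        ext F
        simp only [link, Finset.mem_filter, mem_IndW, Finset.disjoint_singleton_right]
        constructor
        · rintro ⟨⟨hFW, hFind⟩, huF, hUW, hUind⟩
          refine ⟨?_, hFind⟩
          intro z hz
          rw [Finset.mem_filter]
          refine ⟨hFW hz, ?_, fun h => huF (h ▸ hz)⟩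
          exact hUind u (Finset.mem_union_right _ (Finset.mem_singleton_self u)) z
            (Finset.mem_union_left _ hz)
        · rintro ⟨hFW, hFind⟩
          have hsub : ∀ z ∈ F, z ∈ W ∧ ¬ G.Adj u z ∧ z ≠ u := by
            intro z hz
            have := hFW hz
            rw [Finset.mem_filter] at this
            exact this
          refine ⟨⟨fun z hz => (hsub z hz).1, hFind⟩, fun h => (hsub u h).2.2 rfl, ?_, ?_⟩
          · intro z hz
            rcases Finset.mem_union.mp hz with hz | hz
            · exact (hsub z hz).1
            · rw [Finset.mem_singleton] at hz; subst hz; exact huW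
          · intro c hc d hd hcd
            rcases Finset.mem_union.mp hc with hc | hc
            · rcases Finset.mem_union.mp hd with hd | hd
              · exact hFind c hc d hd hcd
              · rw [Finset.mem_singleton] at hd
                rw [hd] at hcd
                exact (hsub c hc).2.1 hcd.symm
            · rw [Finset.mem_singleton] at hc
              rcases Finset.mem_union.mp hd with hd | hd
              · rw [hc] at hcd
                exact (hsub d hd).2.1 hcd
              · rw [Finset.mem_singleton] at hd
                rw [hc, hd] at hcd
                exact G.loopless.irrefl _ hcd
      rw [hlink]
      apply ih
      have hsub2 : (W.filter fun z => ¬ G.Adj u z ∧ z ≠ u) ⊆ W.erase u := by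
        intro z hz
        rw [Finset.mem_filter] at hz
        exact Finset.mem_erase.mpr ⟨hz.2.2, hz.1⟩
      have h1 := Finset.card_le_card hsub2
      have h2 := Finset.card_erase_of_mem huW
      have h3 : 1 ≤ W.card := Finset.card_pos.mpr ⟨u, huW⟩
      omega

end Aux

/-- **The independence complex of a chordal graph is vertex-decomposable.** -/
theorem chordal_indComplex_vertexDecomposable (n : ℕ) (G : SimpleGraph (Fin n))
    [DecidableRel G.Adj] (hG : Chordal G) :
    VertexDecomposable (indComplex n G) := by
  have h : indComplex n G = IndW G (Finset.univ : Finset (Fin n)) := rfl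
  rw [h]
  exact IndW_VD hG (Finset.univ : Finset (Fin n)).card Finset.univ le_rfl
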